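/- Let T = [t_{n,k}]_{n,k≥0} satisfy t_{0,0} = 1 and t_{n,k} = a_n t_{n−1,k−1} + b_n t_{n−1,k} + c_n t_{n−2,k−1} with t_{n,k} = 0 unless 0 ≤ k ≤ n, where all a_n, b_n, c_n ≥ 0. Then T is totally positive, i.e., every minor of T is nonnegative. -/

import Mathlib

/-- An infinite real matrix is totally positive if all its minors are nonnegative. -/
def TotallyPos (A : ℕ → ℕ → ℝ) : Prop :=
  ∀ (k : ℕ) (f g : Fin k → ℕ), StrictMono f → StrictMono g →
    0 ≤ Matrix.det (Matrix.of fun i j : Fin k => A (f i) (g j))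

namespace NRecTP

/-- Generalized rows: `(n, false)` is row `n` of `T`; `(n, true)` is row `n` shifted
one step to the right. -/
def rowF (T : ℕ → ℕ → ℝ) : ℕ × Bool → ℕ → ℝ
  | (n, false), k => T n k
  | (_, true), 0 => 0
  | (n, true), (k+1) => T n k

@[simp] lemma rowF_false (T : ℕ → ℕ → ℝ) (n k : ℕ) : rowF T (n, false) k = T n k := rfl
@[simp] lemma rowF_true_zero (T : ℕ → ℕ → ℝ) (n : ℕ) : rowF T (n, true) 0 = 0 := rfl
@[simp] lemma rowF_true_succ (T : ℕ → ℕ → ℝ) (n k : ℕ) : rowF T (n, true) (k+1) = T n k := rfl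

lemma rowF_snd_true (T : ℕ → ℕ → ℝ) (s : ℕ × Bool) (h : s.2 = true) (x : ℕ) (hx : 0 < x) :
    rowF T s x = T s.1 (x - 1) := by
  obtain ⟨n, b⟩ := s
  cases b with
  | false => simp at h
  | true =>
    obtain ⟨y, rfl⟩ : ∃ y, x = y + 1 := ⟨x - 1, (Nat.succ_pred_eq_of_pos hx).symm⟩
    simp

lemma rowF_snd_true_zero (T : ℕ → ℕ → ℝ) (s : ℕ × Bool) (h : s.2 = true) :
    rowF T s 0 = 0 := by
  obtain ⟨n, b⟩ := s
  cases b with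
  | false => simp at h
  | true => simp

/-- The generalized minor matrix. -/
def mat (T : ℕ → ℕ → ℝ) {k : ℕ} (r : Fin k → ℕ × Bool) (g : Fin k → ℕ) :
    Matrix (Fin k) (Fin k) ℝ :=
  Matrix.of fun i j => rowF T (r i) (g j)

/-- Admissible configurations of generalized rows/columns. -/
structure Valid {k : ℕ} (r : Fin k → ℕ × Bool) (g : Fin k → ℕ) : Prop where
  hg : StrictMono g
  h1 : ∀ i j : Fin k, i < j → (r i).2 = false → (r j).2 = false → (r i).1 < (r j).1
  h2 : ∀ i j : Fin k, i < j → (r i).2 = true → (r j).2 = true → (r i).1 < (r j).1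
  h3 : ∀ i j : Fin k, i < j → (r i).2 = true → (r j).2 = true
  h4 : ∀ i j : Fin k, i < j → (r i).2 = false → (r j).2 = true → (r i).1 ≤ (r j).1 + 1

lemma sum_update_fst {k : ℕ} (r : Fin k → ℕ × Bool) (p : Fin k) (v : ℕ × Bool) :
    ∑ i, (Function.update r p v i).1 + (r p).1 = (∑ i, (r i).1) + v.1 := by
  classical
  have h1 : (fun i => (Function.update r p v i).1)
      = Function.update (fun i => (r i).1) p v.1 := by
    funext i; by_cases h : i = p <;> simp [h, Function.update_apply]
  calc ∑ i, (Function.update r p v i).1 + (r p).1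
      = (v.1 + ∑ i ∈ Finset.univ \ {p}, (r i).1) + (r p).1 := by
        rw [h1, Finset.sum_update_of_mem (Finset.mem_univ p)]
    _ = (∑ i, (r i).1) + v.1 := by
        rw [show (∑ i, (r i).1) = ∑ i ∈ Finset.univ \ {p}, (r i).1 + (r p).1 from
          Finset.sum_eq_sum_sdiff_singleton_add (Finset.mem_univ p) _]
        ring

section Update

variable {k : ℕ} {r : Fin k → ℕ × Bool} {g : Fin k → ℕ}

lemma hbefore_of_last (V : Valid r g) {p : Fin k} (hp : (r p).2 = false) :
    ∀ i, i < p → (r i).2 = false := by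
  intro i hi
  by_contra h
  have hti : (r i).2 = true := by
    cases hh : (r i).2 with
    | false => exact absurd hh h
    | true => rfl
  have := V.h3 i p hi hti
  rw [hp] at this
  exact Bool.false_ne_true this

/-- Replacing the last unshifted row by a shifted row keeps the configuration valid. -/
lemma valid_update_shifted (V : Valid r g) {p : Fin k}
    (hp : (r p).2 = false) (hplast : ∀ j, p < j → (r j).2 = true)
    (n' : ℕ)
    (hle : ∀ i, i < p → (r i).1 ≤ n' + 1)
    (hlt : ∀ j, p < j → n' < (r j).1) :
    Valid (Function.update r p (n', true)) g := by
  have hbef := hbefore_of_last V hp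
  refine ⟨V.hg, ?_, ?_, ?_, ?_⟩
  · intro i j hij hi hj
    by_cases hip : i = p
    · rw [hip, Function.update_self] at hi; simp at hi
    by_cases hjp : j = p
    · rw [hjp, Function.update_self] at hj; simp at hj
    rw [Function.update_of_ne hip] at hi ⊢
    rw [Function.update_of_ne hjp] at hj ⊢
    exact V.h1 i j hij hi hj
  · intro i j hij hi hj
    by_cases hip : i = p
    · have hjp : j ≠ p := by rw [← hip]; exact ne_of_gt hij
      rw [hip, Function.update_self]
      rw [Function.update_of_ne hjp]
      refine hlt j ?_
      rw [← hip]; exact hij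
    by_cases hjp : j = p
    · rw [Function.update_of_ne hip] at hi
      have hij' : i < p := by rw [← hjp]; exact hij
      have := hbef i hij'
      rw [this] at hi; simp at hi
    rw [Function.update_of_ne hip] at hi ⊢
    rw [Function.update_of_ne hjp] at hj ⊢
    exact V.h2 i j hij hi hj
  · intro i j hij hi
    by_cases hjp : j = p
    · rw [hjp, Function.update_self]
    rw [Function.update_of_ne hjp]
    by_cases hip : i = p
    · refine hplast j ?_
      rw [← hip]; exact hij
    · rw [Function.update_of_ne hip] at hi
      exact V.h3 i j hij hi
  · intro i j hij hi hj
    by_cases hip : i = p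
    · rw [hip, Function.update_self] at hi; simp at hi
    rw [Function.update_of_ne hip] at hi ⊢
    by_cases hjp : j = p
    · rw [hjp, Function.update_self]
      have hij' : i < p := by rw [← hjp]; exact hij
      exact hle i hij'
    · rw [Function.update_of_ne hjp] at hj ⊢
      exact V.h4 i j hij hi hj

/-- Replacing the last unshifted row by a smaller unshifted row keeps the
configuration valid. -/
lemma valid_update_unshifted (V : Valid r g) {p : Fin k}
    (hp : (r p).2 = false) (hplast : ∀ j, p < j → (r j).2 = true)
    (n' : ℕ)
    (hne : ∀ i, i < p → (r i).1 < n')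
    (hgt : ∀ j, p < j → n' ≤ (r j).1 + 1) :
    Valid (Function.update r p (n', false)) g := by
  have hbef := hbefore_of_last V hp
  refine ⟨V.hg, ?_, ?_, ?_, ?_⟩
  · intro i j hij hi hj
    by_cases hip : i = p
    · have hij' : p < j := by rw [← hip]; exact hij
      have hjp : j ≠ p := ne_of_gt hij'
      rw [Function.update_of_ne hjp] at hj
      have := hplast j hij'
      rw [this] at hj; simp at hj
    by_cases hjp : j = p
    · rw [Function.update_of_ne hip] at hi ⊢
      rw [hjp, Function.update_self]
      refine hne i ?_
      rw [← hjp]; exact hij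
    rw [Function.update_of_ne hip] at hi ⊢
    rw [Function.update_of_ne hjp] at hj ⊢
    exact V.h1 i j hij hi hj
  · intro i j hij hi hj
    by_cases hip : i = p
    · rw [hip, Function.update_self] at hi; simp at hi
    by_cases hjp : j = p
    · rw [hjp, Function.update_self] at hj; simp at hj
    rw [Function.update_of_ne hip] at hi ⊢
    rw [Function.update_of_ne hjp] at hj ⊢
    exact V.h2 i j hij hi hj
  · intro i j hij hi
    by_cases hip : i = p
    · rw [hip, Function.update_self] at hi; simp at hi
    rw [Function.update_of_ne hip] at hi
    by_cases hjp : j = p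
    · have hij' : i < p := by rw [← hjp]; exact hij
      have := hbef i hij'
      rw [this] at hi; simp at hi
    · rw [Function.update_of_ne hjp]
      exact V.h3 i j hij hi
  · intro i j hij hi hj
    by_cases hjp : j = p
    · rw [hjp, Function.update_self] at hj; simp at hj
    rw [Function.update_of_ne hjp] at hj ⊢
    by_cases hip : i = p
    · rw [hip, Function.update_self]
      refine hgt j ?_
      rw [← hip]; exact hij
    · rw [Function.update_of_ne hip] at hi ⊢
      exact V.h4 i j hij hi hj

end Update

variable {a b c : ℕ → ℝ} {T : ℕ → ℕ → ℝ}

/-- The key lemma: every generalized minor of a recursive matrix is nonnegative. -/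
lemma key (ha : ∀ n, 0 ≤ a n) (hb : ∀ n, 0 ≤ b n) (hc : ∀ n, 0 ≤ c n)
    (h00 : T 0 0 = 1) (hz : ∀ n k, n < k → T n k = 0)
    (h10 : T 1 0 = b 1 * T 0 0)
    (h1k : ∀ k, T 1 (k + 1) = a 1 * T 0 k + b 1 * T 0 (k + 1))
    (hrec0 : ∀ n, T (n + 2) 0 = b (n + 2) * T (n + 1) 0)
    (hrec : ∀ n k, T (n + 2) (k + 1) =
      a (n + 2) * T (n + 1) k + b (n + 2) * T (n + 1) (k + 1) + c (n + 2) * T n k) :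
    ∀ (S k q : ℕ) (r : Fin k → ℕ × Bool) (g : Fin k → ℕ),
      (∑ i, (r i).1) = S →
      (Finset.univ.filter fun i => (r i).2 = true).card = q →
      Valid r g → 0 ≤ (mat T r g).det := by
  classical
  have hrow2 : ∀ (m x : ℕ), T (m + 2) x =
      a (m + 2) * rowF T (m + 1, true) x + b (m + 2) * rowF T (m + 1, false) x
        + c (m + 2) * rowF T (m, true) x := by
    intro m x
    cases x with
    | zero => simp [hrec0 m]
    | succ x => simp [hrec m x]
  have hrow1 : ∀ x, T 1 x = a 1 * rowF T (0, true) x + b 1 * rowF T (0, false) x := by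
    intro x
    cases x with
    | zero => simp [h10]
    | succ x => simp [h1k x]
  intro S
  induction S using Nat.strong_induction_on with
  | _ S ihS =>
  intro k
  induction k using Nat.strong_induction_on with
  | _ k ihk =>
  intro q
  induction q using Nat.strong_induction_on with
  | _ q ihq =>
  intro r g hS hq V
  rcases Nat.eq_zero_or_pos k with hk0 | hkpos
  · subst hk0
    rw [Matrix.det_isEmpty]
    norm_num
  by_cases hall : ∀ i, (r i).2 = true
  · -- all rows are shifted
    obtain ⟨k', rfl⟩ : ∃ k', k = k' + 1 := ⟨k - 1, (Nat.succ_pred_eq_of_pos hkpos).symm⟩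
    by_cases hg0 : g 0 = 0
    · -- first column is zero
      have : (mat T r g).det = 0 := by
        apply Matrix.det_eq_zero_of_column_eq_zero 0
        intro i
        show rowF T (r i) (g 0) = 0
        rw [hg0]
        exact rowF_snd_true_zero T (r i) (hall i)
      rw [this]
    · -- shift all columns left and make all rows unshifted
      have hgpos : ∀ j, 0 < g j := by
        intro j
        have : g 0 ≤ g j := V.hg.monotone (Fin.zero_le j)
        omega
      have hmat : mat T r g = mat T (fun i => ((r i).1, false)) (fun j => g j - 1) := by
        ext i j
        show rowF T (r i) (g j) = rowF T ((r i).1, false) (g j - 1)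
        rw [rowF_snd_true T (r i) (hall i) (g j) (hgpos j)]
        simp
      rw [hmat]
      have hqpos : 0 < q := by
        rw [← hq]
        rw [Finset.filter_true_of_mem (fun i _ => hall i)]
        simp
      refine ihq 0 hqpos (fun i => ((r i).1, false)) (fun j => g j - 1) ?_ ?_ ?_
      · simpa using hS
      · simp
      · refine ⟨?_, ?_, ?_, ?_, ?_⟩
        · intro i j hij
          have h1 : g i < g j := V.hg hij
          have h2 := hgpos i
          show g i - 1 < g j - 1
          omega
        · intro i j hij _ _
          exact V.h2 i j hij (hall i) (hall j)
        · intro i j _ hi hj; simp at hi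
        · intro i j _ hi; simp at hi
        · intro i j _ _ hj; simp at hj
  · -- there is an unshifted row; let p be the last one
    push_neg at hall
    obtain ⟨i0, hi0⟩ := hall
    have hi0' : (r i0).2 = false := by
      cases hh : (r i0).2 with
      | false => rfl
      | true => exact absurd hh hi0
    have hsne : (Finset.univ.filter (fun i => (r i).2 = false)).Nonempty :=
      ⟨i0, by simp [hi0']⟩
    obtain ⟨p, hpmem, hpmax⟩ :
        ∃ p ∈ Finset.univ.filter (fun i : Fin k => (r i).2 = false),
          ∀ j ∈ Finset.univ.filter (fun i : Fin k => (r i).2 = false), j ≤ p :=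
      ⟨_, Finset.max'_mem _ hsne, fun j hj => Finset.le_max' _ j hj⟩
    have hp : (r p).2 = false := (Finset.mem_filter.mp hpmem).2
    have hplast : ∀ j, p < j → (r j).2 = true := by
      intro j hj
      by_contra hjf
      have hjf' : (r j).2 = false := by
        cases hh : (r j).2 with
        | false => rfl
        | true => exact absurd hh hjf
      have hmem : j ∈ Finset.univ.filter (fun i : Fin k => (r i).2 = false) := by
        simp [hjf']
      exact absurd (hpmax j hmem) (not_le.mpr hj)
    have hbef := hbefore_of_last V hp
    have hA : mat T r g = (mat T r g).updateRow p ((mat T r g) p) :=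
      (Matrix.updateRow_eq_self _ p).symm
    -- a generic bound for the updated-row determinants
    have keyUpd : ∀ (v : ℕ × Bool),
        Valid (Function.update r p v) g → (∑ i, (Function.update r p v i).1) < S →
        0 ≤ ((mat T r g).updateRow p (fun j => rowF T v (g j))).det := by
      intro v hV hlt
      have hmat : (mat T r g).updateRow p (fun j => rowF T v (g j))
          = mat T (Function.update r p v) g := by
        ext i j
        by_cases hip : i = p
        · rw [hip, Matrix.updateRow_self]
          show rowF T v (g j) = rowF T (Function.update r p v p) (g j)
          rw [Function.update_self]
        · rw [Matrix.updateRow_ne hip]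
          show rowF T (r i) (g j) = rowF T (Function.update r p v i) (g j)
          rw [Function.update_of_ne hip]
      rw [hmat]
      exact ihS _ hlt k _ (Function.update r p v) g rfl rfl hV
    -- determinant vanishes if the new row duplicates an existing one
    have keyDup : ∀ (v : ℕ × Bool) (j : Fin k), j ≠ p → r j = v →
        ((mat T r g).updateRow p (fun j => rowF T v (g j))).det = 0 := by
      intro v j hjp hrj
      apply Matrix.det_zero_of_row_eq (Ne.symm hjp)
      funext x
      rw [Matrix.updateRow_self, Matrix.updateRow_ne hjp]
      show rowF T v (g x) = rowF T (r j) (g x)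
      rw [hrj]
    -- case on the index of row p
    rcases hnp : (r p).1 with _ | (_ | m)
    · -- (r p).1 = 0 : Laplace expansion along row p (which must be the first row)
      obtain ⟨k', rfl⟩ : ∃ k', k = k' + 1 := ⟨k - 1, (Nat.succ_pred_eq_of_pos hkpos).symm⟩
      have hp0 : p = 0 := by
        by_contra hne
        have h0p : (0 : Fin (k' + 1)) < p := by
          rcases (Fin.zero_le p).lt_or_eq with h | h
          · exact h
          · exact absurd h.symm hne
        have := V.h1 0 p h0p (hbef 0 h0p) hp
        omega
      by_cases hg0 : g 0 = 0
      · -- expand along the first column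
        rw [Matrix.det_succ_column_zero]
        have hterm : ∀ i : Fin (k' + 1), i ≠ 0 →
            (-1 : ℝ)^(i:ℕ) * (mat T r g) i 0 * ((mat T r g).submatrix i.succAbove Fin.succ).det
              = 0 := by
          intro i hi
          have hipos : p < i := by
            rw [hp0]
            exact lt_of_le_of_ne (Fin.zero_le i) (Ne.symm hi)
          have : (mat T r g) i 0 = 0 := by
            show rowF T (r i) (g 0) = 0
            rw [hg0]
            exact rowF_snd_true_zero T (r i) (hplast i hipos)
          rw [this]; ring
        rw [Finset.sum_eq_single 0 (fun i _ hi => hterm i hi) (by simp)]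
        have h00' : (mat T r g) 0 0 = 1 := by
          show rowF T (r 0) (g 0) = 1
          have : r 0 = (0, false) := by
            have h1 : (r 0).1 = 0 := by rw [← hp0, hnp]
            have h2 : (r 0).2 = false := by rw [← hp0]; exact hp
            exact Prod.ext h1 h2
          rw [this, hg0]
          simpa using h00
        rw [h00', Fin.succAbove_zero]
        have hsub : (mat T r g).submatrix Fin.succ Fin.succ
            = mat T (r ∘ Fin.succ) (g ∘ Fin.succ) := rfl
        simp only [Fin.val_zero, pow_zero, one_mul, hsub]
        refine ihk k' (Nat.lt_succ_self k') _ (r ∘ Fin.succ) (g ∘ Fin.succ) ?_ rfl ?_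
        · have := hS
          rw [Fin.sum_univ_succ] at this
          have h0 : (r 0).1 = 0 := by rw [← hp0, hnp]
          simp only [Function.comp_apply]
          omega
        · refine ⟨fun i j hij => V.hg (Fin.succ_lt_succ_iff.mpr hij),
            fun i j hij => V.h1 _ _ (Fin.succ_lt_succ_iff.mpr hij),
            fun i j hij => V.h2 _ _ (Fin.succ_lt_succ_iff.mpr hij),
            fun i j hij => V.h3 _ _ (Fin.succ_lt_succ_iff.mpr hij),
            fun i j hij => V.h4 _ _ (Fin.succ_lt_succ_iff.mpr hij)⟩
      · -- the row p is identically zero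
        have : (mat T r g).det = 0 := by
          apply Matrix.det_eq_zero_of_row_eq_zero p
          intro j
          show rowF T (r p) (g j) = 0
          have hr : r p = (0, false) := by rw [← hnp, ← hp]
          rw [hr]
          have h0j : 0 < g j := by
            have : g 0 ≤ g j := V.hg.monotone (Fin.zero_le j)
            omega
          simpa using hz 0 (g j) h0j
        rw [this]
    · -- (r p).1 = 1 : expand T 1 x = a 1 * (shift row 0) + b 1 * row 0
      have hnp1 : (r p).1 = 1 := by omega
      have hrp : r p = (1, false) := by rw [← hnp1, ← hp]
      have hApv : (mat T r g) p = a 1 • (fun j => rowF T (0, true) (g j))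
          + b 1 • (fun j => rowF T (0, false) (g j)) := by
        funext j
        show rowF T (r p) (g j) = _
        rw [hrp]
        simpa using hrow1 (g j)
      rw [hA, hApv, Matrix.det_updateRow_add, Matrix.det_updateRow_smul,
        Matrix.det_updateRow_smul]
      have hterm1 : 0 ≤ ((mat T r g).updateRow p (fun j => rowF T (0, true) (g j))).det := by
        by_cases hcol : ∃ j, p < j ∧ (r j).1 = 0
        · obtain ⟨j, hj1, hj2⟩ := hcol
          rw [keyDup (0, true) j (ne_of_gt hj1) (by rw [← hj2, ← hplast j hj1])]
        · push_neg at hcol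
          apply keyUpd
          · apply valid_update_shifted V hp hplast 0
            · intro i hi
              have := V.h1 i p hi (hbef i hi) hp
              omega
            · intro j hj
              exact Nat.pos_of_ne_zero (hcol j hj)
          · rw [← hS]
            have := sum_update_fst r p (0, true)
            omega
      have hterm2 : 0 ≤ ((mat T r g).updateRow p (fun j => rowF T (0, false) (g j))).det := by
        by_cases hcol : ∃ i, i < p ∧ (r i).1 = 0
        · obtain ⟨i, hi1, hi2⟩ := hcol
          rw [keyDup (0, false) i (ne_of_lt hi1) (by rw [← hi2, ← hbef i hi1])]
        · push_neg at hcol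
          apply keyUpd
          · apply valid_update_unshifted V hp hplast 0
            · intro i hi
              have h1 := V.h1 i p hi (hbef i hi) hp
              have h2 := hcol i hi
              omega
            · intro j hj
              omega
          · rw [← hS]
            have := sum_update_fst r p (0, false)
            omega
      have h1 := mul_nonneg (ha 1) hterm1
      have h2 := mul_nonneg (hb 1) hterm2
      linarith
    · -- (r p).1 = m + 2 : full three-term expansion
      have hnp2 : (r p).1 = m + 2 := by omega
      have hrp : r p = (m + 2, false) := by rw [← hnp2, ← hp]
      have hApv : (mat T r g) p = a (m + 2) • (fun j => rowF T (m + 1, true) (g j))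
          + (b (m + 2) • (fun j => rowF T (m + 1, false) (g j))
            + c (m + 2) • (fun j => rowF T (m, true) (g j))) := by
        funext j
        show rowF T (r p) (g j) = _
        rw [hrp]
        have := hrow2 m (g j)
        simp only [rowF_false] at this ⊢
        simp only [Pi.add_apply, Pi.smul_apply, smul_eq_mul]
        rw [this]; ring
      rw [hA, hApv, Matrix.det_updateRow_add, Matrix.det_updateRow_add,
        Matrix.det_updateRow_smul, Matrix.det_updateRow_smul, Matrix.det_updateRow_smul]
      have hle1 : ∀ i, i < p → (r i).1 < m + 2 := by
        intro i hi
        have := V.h1 i p hi (hbef i hi) hp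
        omega
      have hge1 : ∀ j, p < j → m + 1 ≤ (r j).1 := by
        intro j hj
        have := V.h4 p j hj hp (hplast j hj)
        omega
      have hterm1 : 0 ≤ ((mat T r g).updateRow p (fun j => rowF T (m + 1, true) (g j))).det := by
        by_cases hcol : ∃ j, p < j ∧ (r j).1 = m + 1
        · obtain ⟨j, hj1, hj2⟩ := hcol
          rw [keyDup (m + 1, true) j (ne_of_gt hj1) (by rw [← hj2, ← hplast j hj1])]
        · push_neg at hcol
          apply keyUpd
          · apply valid_update_shifted V hp hplast (m + 1)
            · intro i hi
              have := hle1 i hi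
              omega
            · intro j hj
              have h1 := hge1 j hj
              have h2 := hcol j hj
              omega
          · rw [← hS]
            have := sum_update_fst r p (m + 1, true)
            omega
      have hterm2 : 0 ≤ ((mat T r g).updateRow p (fun j => rowF T (m + 1, false) (g j))).det := by
        by_cases hcol : ∃ i, i < p ∧ (r i).1 = m + 1
        · obtain ⟨i, hi1, hi2⟩ := hcol
          rw [keyDup (m + 1, false) i (ne_of_lt hi1) (by rw [← hi2, ← hbef i hi1])]
        · push_neg at hcol
          apply keyUpd
          · apply valid_update_unshifted V hp hplast (m + 1)
            · intro i hi
              have h1 := hle1 i hi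
              have h2 := hcol i hi
              omega
            · intro j hj
              have := hge1 j hj
              omega
          · rw [← hS]
            have := sum_update_fst r p (m + 1, false)
            omega
      have hterm3 : 0 ≤ ((mat T r g).updateRow p (fun j => rowF T (m, true) (g j))).det := by
        apply keyUpd
        · apply valid_update_shifted V hp hplast m
          · intro i hi
            have := hle1 i hi
            omega
          · intro j hj
            have := hge1 j hj
            omega
        · rw [← hS]
          have := sum_update_fst r p (m, true)
          omega
      have h1 := mul_nonneg (ha (m + 2)) hterm1
      have h2 := mul_nonneg (hb (m + 2)) hterm2
      have h3 := mul_nonneg (hc (m + 2)) hterm3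
      linarith

end NRecTP

/-- An `n`-recursive matrix `T` given by
`t_{n,k} = a_n t_{n−1,k−1} + b_n t_{n−1,k} + c_n t_{n−2,k−1}` with nonnegative
coefficient sequences is totally positive. -/
theorem nRecursive_totallyPos (a b c : ℕ → ℝ) (T : ℕ → ℕ → ℝ)
    (ha : ∀ n, 0 ≤ a n) (hb : ∀ n, 0 ≤ b n) (hc : ∀ n, 0 ≤ c n)
    (h00 : T 0 0 = 1) (hz : ∀ n k, n < k → T n k = 0)
    (h10 : T 1 0 = b 1 * T 0 0)
    (h1k : ∀ k, T 1 (k + 1) = a 1 * T 0 k + b 1 * T 0 (k + 1))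
    (hrec0 : ∀ n, T (n + 2) 0 = b (n + 2) * T (n + 1) 0)
    (hrec : ∀ n k, T (n + 2) (k + 1) =
      a (n + 2) * T (n + 1) k + b (n + 2) * T (n + 1) (k + 1) + c (n + 2) * T n k) :
    TotallyPos T := by
  intro k f g hf hg
  have := NRecTP.key ha hb hc h00 hz h10 h1k hrec0 hrec (∑ i, f i) k 0
    (fun i => (f i, false)) g rfl (by simp)
    ⟨hg, fun i j hij _ _ => hf hij, fun i j _ hi => by simp at hi,
      fun i j _ hi => by simp at hi, fun i j _ _ hj => by simp at hj⟩
  simpa [NRecTP.mat, NRecTP.rowF] using this
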